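/- Suppose k, n, m are positive integers with k ≥ 150, n > m ≥ 1, a1, a2 ∈ {1,…,9}, and P_k = a1·(10^n−1)/9 − a2·(10^m−1)/9. Then |9·10^{−n}·α^k/(a1·2√2) − 1| ≤ 9.81/10^{n−m}, where α = 1 + √2. -/

import Mathlib

/-- The Pell sequence: `P 0 = 0`, `P 1 = 1`, `P (n+2) = 2 * P (n+1) + P n`. -/
def pell : ℕ → ℕ
  | 0 => 0
  | 1 => 1
  | n + 2 => 2 * pell (n + 1) + pell n

lemma alpha_pow (k : ℕ) : (1 + Real.sqrt 2) ^ k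
    = 2 * Real.sqrt 2 * pell k + (1 - Real.sqrt 2) ^ k := by
  have hs : Real.sqrt 2 ^ 2 = 2 := Real.sq_sqrt (by norm_num)
  induction k using Nat.strong_induction_on with
  | _ k ih =>
    match k with
    | 0 => simp [pell]
    | 1 => simp [pell]; ring
    | (k+2) =>
      have h1 := ih (k+1) (by omega)
      have h0 := ih k (by omega)
      have hp : (pell (k+2) : ℝ) = 2 * pell (k+1) + pell k := by
        show ((2 * pell (k+1) + pell k : ℕ) : ℝ) = _
        push_cast; ring
      have e1 : (1 + Real.sqrt 2) ^ (k+2)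
          = 2 * (1 + Real.sqrt 2) ^ (k+1) + (1 + Real.sqrt 2) ^ k := by
        rw [pow_succ, pow_succ]
        linear_combination (1 + Real.sqrt 2) ^ k * hs
      have e2 : (1 - Real.sqrt 2) ^ (k+2)
          = 2 * (1 - Real.sqrt 2) ^ (k+1) + (1 - Real.sqrt 2) ^ k := by
        rw [pow_succ, pow_succ]
        linear_combination (1 - Real.sqrt 2) ^ k * hs
      rw [e1, e2, hp, h1, h0]; ring

set_option maxHeartbeats 1000000 in
/-- `|9 * 10^(-n) * α^k / (a1 * 2√2) - 1| ≤ 9.81 / 10^(n-m)` with `α = 1 + √2`. -/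
theorem pell_linear_form_bound_one (k n m a1 a2 : ℕ) (hk : 150 ≤ k) (hnm : m < n) (hm : 1 ≤ m)
    (ha11 : 1 ≤ a1) (ha19 : a1 ≤ 9) (ha21 : 1 ≤ a2) (ha29 : a2 ≤ 9)
    (heq : (pell k : ℤ) = (a1 : ℤ) * ((10 ^ n - 1) / 9) - (a2 : ℤ) * ((10 ^ m - 1) / 9)) :
    |9 * (10 : ℝ) ^ (-(n : ℤ)) * (1 + Real.sqrt 2) ^ k / ((a1 : ℝ) * (2 * Real.sqrt 2)) - 1| ≤
      9.81 / 10 ^ (n - m) := by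
  -- integer identity
  have hdn : (9:ℤ) ∣ 10 ^ n - 1 := by
    have := sub_dvd_pow_sub_pow (10:ℤ) 1 n
    simpa using this
  have hdm : (9:ℤ) ∣ 10 ^ m - 1 := by
    have := sub_dvd_pow_sub_pow (10:ℤ) 1 m
    simpa using this
  obtain ⟨cn, hcn⟩ := hdn
  obtain ⟨cm, hcm⟩ := hdm
  rw [hcn, hcm, Int.mul_ediv_cancel_left _ (by norm_num), Int.mul_ediv_cancel_left _ (by norm_num)]
    at heq
  have hP9 : 9 * (pell k : ℝ) = (a1:ℝ) * (10 ^ n - 1) - (a2:ℝ) * (10 ^ m - 1) := by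
    have h9 : 9 * (pell k : ℤ) = (a1:ℤ) * (10 ^ n - 1) - (a2:ℤ) * (10 ^ m - 1) := by
      rw [hcn, hcm]; linarith [heq]
    exact_mod_cast congrArg (fun z : ℤ => (z : ℝ)) h9
  -- real setup
  set s := Real.sqrt 2 with hs_def
  have hs : s ^ 2 = 2 := Real.sq_sqrt (by norm_num)
  have hs1 : 1 ≤ s := by nlinarith [Real.sqrt_nonneg 2]
  have hs32 : s ≤ 3/2 := by nlinarith [Real.sqrt_nonneg 2]
  have hA1 : (1:ℝ) ≤ (a1:ℝ) := by exact_mod_cast ha11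
  have hA0 : (0:ℝ) < (a1:ℝ) := by linarith
  have ha2r : ((a2:ℝ)) ≤ 9 := by exact_mod_cast ha29
  have ha2r0 : (0:ℝ) ≤ (a2:ℝ) := by positivity
  have hxn : (0:ℝ) < (10:ℝ) ^ n := by positivity
  have hxm1 : (1:ℝ) ≤ (10:ℝ) ^ m := one_le_pow₀ (by norm_num)
  have hx : (10:ℝ) ^ (-(n:ℤ)) = ((10:ℝ) ^ n)⁻¹ := by
    rw [zpow_neg, zpow_natCast]
  have hb : |(1 - s) ^ k| ≤ 1/2 := by
    rw [abs_pow]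
    have h1 : |1 - s| ≤ 1/2 := by rw [abs_le]; constructor <;> linarith
    calc |1 - s| ^ k ≤ (1/2) ^ k := by
          exact pow_le_pow_left₀ (abs_nonneg _) h1 k
      _ ≤ (1/2) ^ 1 := by
          apply pow_le_pow_of_le_one (by norm_num) (by norm_num); omega
      _ = 1/2 := by norm_num
  -- key identity
  have hAs : (a1:ℝ) * (2 * s) ≠ 0 := by positivity
  have key : 9 * (10:ℝ) ^ (-(n:ℤ)) * (1 + s) ^ k / ((a1:ℝ) * (2 * s)) - 1
      = ((10:ℝ) ^ n)⁻¹ * (-1 - ((a2:ℝ) / (a1:ℝ)) * (10 ^ m - 1)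
          + 9 * (1 - s) ^ k / ((a1:ℝ) * (2 * s))) := by
    rw [hx, alpha_pow k]
    field_simp
    linear_combination (2 * Real.sqrt 2) * hP9
  rw [key]
  -- bound the bracket
  have hT1 : (0:ℝ) ≤ ((a2:ℝ) / (a1:ℝ)) * (10 ^ m - 1) := by
    apply mul_nonneg (by positivity); linarith
  have hT2 : ((a2:ℝ) / (a1:ℝ)) * (10 ^ m - 1) ≤ 9 * (10 ^ m - 1) := by
    apply mul_le_mul_of_nonneg_right _ (by linarith)
    calc (a2:ℝ) / (a1:ℝ) ≤ (a2:ℝ) := div_le_self ha2r0 hA1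
      _ ≤ 9 := ha2r
  have hden : (2:ℝ) ≤ |(a1:ℝ) * (2 * s)| := by
    rw [abs_of_pos (by positivity)]; nlinarith
  have hnum : |9 * (1 - s) ^ k| ≤ 9/2 := by
    rw [abs_mul, abs_of_pos (show (0:ℝ) < 9 by norm_num)]; linarith
  have hT3 : |9 * (1 - s) ^ k / ((a1:ℝ) * (2 * s))| ≤ 9/4 := by
    rw [abs_div, div_le_iff₀ (lt_of_lt_of_le two_pos hden)]
    linarith
  have habs : |(-1 - ((a2:ℝ) / (a1:ℝ)) * (10 ^ m - 1)
      + 9 * (1 - s) ^ k / ((a1:ℝ) * (2 * s)))| ≤ 9 * 10 ^ m := by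
    rw [abs_le] at hT3 ⊢
    constructor <;> linarith [hT3.1, hT3.2]
  calc |((10:ℝ) ^ n)⁻¹ * (-1 - ((a2:ℝ) / (a1:ℝ)) * (10 ^ m - 1)
          + 9 * (1 - s) ^ k / ((a1:ℝ) * (2 * s)))|
      ≤ ((10:ℝ) ^ n)⁻¹ * (9 * 10 ^ m) := by
        rw [abs_mul, abs_of_pos (by positivity)]
        exact mul_le_mul_of_nonneg_left habs (by positivity)
    _ ≤ 9.81 / 10 ^ (n - m) := by
        have hsplit : (10:ℝ) ^ (n - m) * 10 ^ m = 10 ^ n := by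
          rw [← pow_add]; congr 1; omega
        have hpnm : (0:ℝ) < (10:ℝ) ^ (n - m) := by positivity
        rw [inv_mul_eq_div, div_le_div_iff₀ hxn hpnm]
        nlinarith [hsplit, hxn]
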